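/- Monotonic improvement of the Frobenius norm discrepancy in the noiseless case: Let 0 < d < n, let Ū and U_t be n×d matrices with orthonormal columns, and let the observation be x = v = Ū s for some s ∈ ℝ^d. Write v_∥ = U_t U_tᵀ v and v_⊥ = v − v_∥, and assume v_∥ ≠ 0 and v_⊥ ≠ 0. Apply one GROUSE update with step size θ = arctan(‖v_⊥‖/‖v_∥‖) (α = 0). Then ε_t − ε_{t+1} = 1 − ‖Ū Ūᵀ v_∥‖²/‖v_∥‖². -/

import Mathlib

open Matrix

noncomputable def vnorm {m : Type*} [Fintype m] (x : m → ℝ) : ℝ :=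
  Real.sqrt (∑ i, x i ^ 2)

/-- `U` has orthonormal columns. -/
def OrthonormalCols {n d : ℕ} (U : Matrix (Fin n) (Fin d) ℝ) : Prop :=
  Uᵀ * U = 1

/-- One GROUSE update with step angle `θ`: with `w = Uᵀ x`, `p = U w`, `r = x − p`,
`U⁺ = U + (cos θ · p/‖p‖ + sin θ · r/‖r‖ − p/‖p‖) wᵀ/‖w‖`. -/
noncomputable def grouseUpdate {n d : ℕ} (U : Matrix (Fin n) (Fin d) ℝ) (x : Fin n → ℝ)
    (θ : ℝ) : Matrix (Fin n) (Fin d) ℝ :=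
  let w : Fin d → ℝ := Uᵀ *ᵥ x
  let p : Fin n → ℝ := U *ᵥ w
  let r : Fin n → ℝ := x - p
  U + Matrix.of (fun i j =>
    ((Real.cos θ * (p i / vnorm p) + Real.sin θ * (r i / vnorm r)) - p i / vnorm p)
      * (w j / vnorm w))

/-- Frobenius norm discrepancy `ε = d − ‖Ūᵀ U‖_F²`. -/
noncomputable def epsDisc {n d : ℕ} (Ub U : Matrix (Fin n) (Fin d) ℝ) : ℝ :=
  (d : ℝ) - ∑ i, ∑ j, ((Ubᵀ * U) i j) ^ 2

lemma vnorm_sq {m : Type*} [Fintype m] (x : m → ℝ) : vnorm x ^ 2 = x ⬝ᵥ x := by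
  rw [vnorm, Real.sq_sqrt (by positivity)]
  simp [dotProduct, sq]

lemma vnorm_nonneg {m : Type*} [Fintype m] (x : m → ℝ) : 0 ≤ vnorm x :=
  Real.sqrt_nonneg _

lemma vnorm_pos {m : Type*} [Fintype m] {x : m → ℝ} (h : x ≠ 0) : 0 < vnorm x := by
  rw [vnorm, Real.sqrt_pos]
  obtain ⟨i, hi⟩ : ∃ i, x i ≠ 0 := by
    by_contra hc
    push_neg at hc
    exact h (funext hc)
  exact Finset.sum_pos' (fun j _ => by positivity) ⟨i, Finset.mem_univ i, by positivity⟩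

lemma adj_dot {n m : ℕ} (A : Matrix (Fin n) (Fin m) ℝ) (x : Fin m → ℝ) (y : Fin n → ℝ) :
    (A *ᵥ x) ⬝ᵥ y = x ⬝ᵥ (Aᵀ *ᵥ y) := by
  rw [dotProduct_mulVec, vecMul_transpose]

set_option maxHeartbeats 1600000 in
/-- **Monotonic improvement of the Frobenius norm discrepancy, noiseless case.**
With observation `v = Ū s`, projection `v_∥ = U Uᵀ v ≠ 0`, residual `v_⊥ = v − v_∥ ≠ 0`,
and the greedy step `θ = arctan(‖v_⊥‖/‖v_∥‖)`, one GROUSE update yields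
`ε_t − ε_{t+1} = 1 − ‖Ū Ūᵀ v_∥‖²/‖v_∥‖²`. -/
theorem eps_monotone_noiseless {n d : ℕ} (hd : 0 < d) (hdn : d < n)
    (Ub U : Matrix (Fin n) (Fin d) ℝ)
    (hUb : OrthonormalCols Ub) (hU : OrthonormalCols U)
    (s : Fin d → ℝ) (v : Fin n → ℝ) (hv : v = Ub *ᵥ s)
    (vpar vperp : Fin n → ℝ)
    (hvpar : vpar = U *ᵥ (Uᵀ *ᵥ v)) (hvperp : vperp = v - vpar)
    (hpar : vpar ≠ 0) (hperp : vperp ≠ 0) :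
    epsDisc Ub U
        - epsDisc Ub (grouseUpdate U v (Real.arctan (vnorm vperp / vnorm vpar)))
      = 1 - vnorm (Ub *ᵥ (Ubᵀ *ᵥ vpar)) ^ 2 / vnorm vpar ^ 2 := by
  have hUb' : Ubᵀ * Ub = 1 := hUb
  have hU' : Uᵀ * U = 1 := hU
  set w : Fin d → ℝ := Uᵀ *ᵥ v with hw
  set P : ℝ := vnorm vpar with hP
  set R : ℝ := vnorm vperp with hR
  set V : ℝ := vnorm v with hV
  have hPpos : 0 < P := vnorm_pos hpar
  have hRpos : 0 < R := vnorm_pos hperp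
  -- basic inner-product facts
  have hpp : vpar ⬝ᵥ vpar = P ^ 2 := (vnorm_sq vpar).symm
  have hww : w ⬝ᵥ w = P ^ 2 := by
    have h1 : vpar ⬝ᵥ vpar = w ⬝ᵥ w := by
      rw [hvpar, adj_dot, mulVec_mulVec, hU', one_mulVec]
    rw [← h1, hpp]
  have hvw : v ⬝ᵥ vpar = P ^ 2 := by
    rw [hvpar, dotProduct_comm, adj_dot, ← hw, hww]
  have hUbUbv : Ub *ᵥ (Ubᵀ *ᵥ v) = v := by
    rw [hv, mulVec_mulVec, mulVec_mulVec, Matrix.mul_assoc, hUb', Matrix.mul_one]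
  have hvv : v ⬝ᵥ v = V ^ 2 := (vnorm_sq v).symm
  have hVsq : V ^ 2 = P ^ 2 + R ^ 2 := by
    have hrr : vperp ⬝ᵥ vperp = R ^ 2 := (vnorm_sq vperp).symm
    rw [hvperp, sub_dotProduct, dotProduct_sub, dotProduct_sub,
      dotProduct_comm vpar v] at hrr
    rw [hvv, hpp, hvw] at hrr
    linarith
  have hVpos : 0 < V := by
    have h2 : 0 < V ^ 2 := by nlinarith
    nlinarith [vnorm_nonneg v, hV]
  -- the step angle
  set θ : ℝ := Real.arctan (R / P) with hθ
  have hsqrt : Real.sqrt (1 + (R / P) ^ 2) = V / P := by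
    rw [show 1 + (R / P) ^ 2 = (V / P) ^ 2 by field_simp; nlinarith]
    exact Real.sqrt_sq (by positivity)
  have hcos : Real.cos θ = P / V := by
    rw [hθ, Real.cos_arctan, hsqrt, one_div_div]
  have hsin : Real.sin θ = R / V := by
    rw [hθ, Real.sin_arctan, hsqrt]
    field_simp
  have hnw : vnorm w = P := by
    rw [vnorm, show (∑ i, w i ^ 2) = P ^ 2 by
      rw [← hww]; simp [dotProduct, sq], Real.sqrt_sq hPpos.le]
  -- abbreviations for the update
  set c : Fin n → ℝ := V⁻¹ • v - P⁻¹ • vpar with hcdef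
  set b : Fin d → ℝ := P⁻¹ • w with hbdef
  have hc : ∀ i, c i = v i / V - vpar i / P := by
    intro i; simp [hcdef, div_eq_inv_mul]
  have hb : ∀ j, b j = w j / P := by
    intro j; simp [hbdef, div_eq_inv_mul]
  set U' : Matrix (Fin n) (Fin d) ℝ := Matrix.of (fun i j => U i j + c i * b j) with hU'def
  have hvperpi : ∀ i, vperp i = v i - vpar i := by
    intro i; rw [hvperp]; rfl
  have hgu : grouseUpdate U v θ = U' := by
    unfold grouseUpdate
    ext i j
    simp only [Matrix.add_apply, Matrix.of_apply, hU'def]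
    rw [← hw, ← hvpar, ← hvperp, ← hP, ← hR, hnw, hcos, hsin, hc i, hb j]
    congr 1
    rw [hvperpi i]
    field_simp
    ring
  -- cross matrix and outer-product pieces
  set M : Matrix (Fin d) (Fin d) ℝ := Ubᵀ * U with hM
  set a : Fin d → ℝ := Ubᵀ *ᵥ c with ha
  have hM' : ∀ k j, (Ubᵀ * U') k j = M k j + a k * b j := by
    intro k j
    simp only [hU'def, hM, ha, Matrix.mul_apply, Matrix.of_apply, mulVec, dotProduct,
      transpose_apply, mul_add, Finset.sum_add_distrib, ← Finset.sum_mul]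
    congr 1
    rw [Finset.sum_mul]
    apply Finset.sum_congr rfl
    intro i _
    ring
  -- the vector q = Ub Ubᵀ vpar and the scalar K2
  set q : Fin n → ℝ := Ub *ᵥ (Ubᵀ *ᵥ vpar) with hqdef
  set K2 : ℝ := (Ubᵀ *ᵥ vpar) ⬝ᵥ (Ubᵀ *ᵥ vpar) with hK2def
  have hUbtq : Ubᵀ *ᵥ q = Ubᵀ *ᵥ vpar := by
    rw [hqdef, mulVec_mulVec, hUb', one_mulVec]
  have hqq : q ⬝ᵥ q = K2 := by
    rw [hqdef, adj_dot, ← hqdef, hUbtq]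
  have hpq : vpar ⬝ᵥ q = K2 := by
    rw [dotProduct_comm, hqdef, adj_dot]
  have hvq : v ⬝ᵥ q = P ^ 2 := by
    rw [dotProduct_comm, hqdef, adj_dot, adj_dot Ubᵀ vpar, transpose_transpose,
      hUbUbv, dotProduct_comm, hvw]
  -- dot products of the update pieces
  have hbb : b ⬝ᵥ b = 1 := by
    rw [hbdef, smul_dotProduct, dotProduct_smul, hww, smul_eq_mul, smul_eq_mul]
    field_simp
  have hMb : M *ᵥ b = P⁻¹ • (Ubᵀ *ᵥ vpar) := by
    rw [hM, hbdef, ← mulVec_mulVec, mulVec_smul, ← hvpar, mulVec_smul]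
  have hcq : c ⬝ᵥ q = V⁻¹ * P ^ 2 - P⁻¹ * K2 := by
    rw [hcdef, sub_dotProduct, smul_dotProduct, smul_dotProduct, hvq, hpq,
      smul_eq_mul, smul_eq_mul]
  have habM : a ⬝ᵥ (M *ᵥ b) = P⁻¹ * (V⁻¹ * P ^ 2 - P⁻¹ * K2) := by
    rw [hMb, dotProduct_smul, ha, adj_dot, transpose_transpose, ← hqdef, hcq, smul_eq_mul]
  have hUbc : Ub *ᵥ (Ubᵀ *ᵥ c) = V⁻¹ • v - P⁻¹ • q := by
    rw [hcdef, mulVec_sub, mulVec_sub, mulVec_smul, mulVec_smul, mulVec_smul, mulVec_smul,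
      hUbUbv, hqdef]
  have haa : a ⬝ᵥ a = 1 - 2 * (P / V) + K2 / P ^ 2 := by
    rw [ha, adj_dot, transpose_transpose, hUbc, hcdef, sub_dotProduct, smul_dotProduct,
      smul_dotProduct, dotProduct_sub, dotProduct_sub, dotProduct_smul, dotProduct_smul,
      dotProduct_smul, dotProduct_smul, hvv, hvq, dotProduct_comm vpar v, hvw, hpq]
    simp only [smul_eq_mul]
    field_simp
    ring
  -- expansion of the Frobenius inner sums
  have hsum : ∑ k, ∑ j, ((Ubᵀ * U') k j) ^ 2
      = (∑ k, ∑ j, (M k j) ^ 2) + 2 * (a ⬝ᵥ (M *ᵥ b)) + (a ⬝ᵥ a) * (b ⬝ᵥ b) := by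
    have e1 : ∀ k, (∑ j, (M k j + a k * b j) ^ 2)
        = (∑ j, (M k j) ^ 2) + (2 * a k) * (∑ j, M k j * b j)
          + a k ^ 2 * (∑ j, b j ^ 2) := by
      intro k
      rw [Finset.mul_sum, Finset.mul_sum, ← Finset.sum_add_distrib, ← Finset.sum_add_distrib]
      apply Finset.sum_congr rfl
      intro j _
      ring
    calc ∑ k, ∑ j, ((Ubᵀ * U') k j) ^ 2
        = ∑ k, ((∑ j, (M k j) ^ 2) + (2 * a k) * (∑ j, M k j * b j)
            + a k ^ 2 * (∑ j, b j ^ 2)) := by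
          apply Finset.sum_congr rfl
          intro k _
          rw [← e1]
          apply Finset.sum_congr rfl
          intro j _
          rw [hM' k j]
      _ = (∑ k, ∑ j, (M k j) ^ 2) + (∑ k, (2 * a k) * (∑ j, M k j * b j))
            + (∑ k, a k ^ 2) * (∑ j, b j ^ 2) := by
          rw [Finset.sum_add_distrib, Finset.sum_add_distrib, ← Finset.sum_mul]
      _ = (∑ k, ∑ j, (M k j) ^ 2) + 2 * (∑ k, a k * (∑ j, M k j * b j))
            + (∑ k, a k ^ 2) * (∑ j, b j ^ 2) := by
          congr 1
          congr 1
          rw [Finset.mul_sum]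
          apply Finset.sum_congr rfl
          intro k _
          ring
      _ = (∑ k, ∑ j, (M k j) ^ 2) + 2 * (a ⬝ᵥ (M *ᵥ b)) + (a ⬝ᵥ a) * (b ⬝ᵥ b) := by
          have d1 : a ⬝ᵥ (M *ᵥ b) = ∑ k, a k * (∑ j, M k j * b j) := by
            simp [dotProduct, mulVec]
          have d2 : a ⬝ᵥ a = ∑ k, a k ^ 2 := by
            apply Finset.sum_congr rfl
            intro k _
            ring
          have d3 : b ⬝ᵥ b = ∑ j, b j ^ 2 := by
            apply Finset.sum_congr rfl
            intro j _
            ring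
          rw [d1, d2, d3]
  -- put everything together
  rw [hgu]
  simp only [epsDisc]
  rw [hsum, habM, haa, hbb, show vnorm q ^ 2 = K2 by rw [vnorm_sq]; exact hqq]
  field_simp
  ring
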